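/- arXiv:2103.06897 — 9 statements merged into one kernel-verified Lean document; each statement's English description precedes it below -/
import Mathlib

section
/- If X is a positive semidefinite operator on a finite-dimensional Hilbert space with p_k = Tr(X^k) and p_1 = Tr(X) = 1, then for every n ≥ 3, p_n^{n-2} ≥ p_{n-1}^{n-1}. -/
open ComplexOrder

theorem higher_order_moment_ineq (d : ℕ) (X : Matrix (Fin d) (Fin d) ℂ)
    (hX : X.PosSemidef) (htr : X.trace = 1)
    (p : ℕ → ℝ) (hp : ∀ k, (X ^ k).trace = (p k : ℂ)) :
    ∀ n : ℕ, 3 ≤ n → (p n) ^ (n - 2) ≥ (p (n - 1)) ^ (n - 1) := by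
  classical
  set lam := hX.1.eigenvalues with hlam
  have hnn : ∀ i, 0 ≤ lam i := hX.eigenvalues_nonneg
  -- trace of powers in terms of eigenvalues
  have htrk : ∀ k, (X ^ k).trace = ∑ i, ((lam i : ℂ)) ^ k := by
    intro k
    have hst := hX.1.spectral_theorem
    rw [Unitary.conjStarAlgAut_apply] at hst
    set U := (Matrix.IsHermitian.eigenvectorUnitary hX.1 : Matrix (Fin d) (Fin d) ℂ)
    have hU : star U * U = 1 := (Matrix.mem_unitaryGroup_iff').mp
      (Matrix.IsHermitian.eigenvectorUnitary hX.1).2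
    have key : ∀ (A B : Matrix (Fin d) (Fin d) ℂ),
        (U * A * star U) * (U * B * star U) = U * (A * B) * star U := by
      intro A B
      calc (U * A * star U) * (U * B * star U)
          = U * (A * ((star U * U) * (B * star U))) := by simp only [Matrix.mul_assoc]
        _ = U * (A * B) * star U := by rw [hU]; simp only [Matrix.one_mul, Matrix.mul_assoc]
    have hpow : X ^ k = U * (Matrix.diagonal (RCLike.ofReal ∘ lam)) ^ k * star U := by
      induction k with
      | zero =>
        simp only [pow_zero, one_mul, Matrix.mul_one]
        exact ((Matrix.mem_unitaryGroup_iff).mp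
          (Matrix.IsHermitian.eigenvectorUnitary hX.1).2).symm
      | succ k ih =>
        rw [pow_succ, pow_succ, ← key, ← ih, ← hst]
    rw [hpow, Matrix.trace_mul_comm, ← Matrix.mul_assoc, hU, Matrix.one_mul,
      Matrix.diagonal_pow, Matrix.trace_diagonal]
    simp
  -- p in terms of eigenvalues
  have hpk : ∀ k, p k = ∑ i, (lam i) ^ k := by
    intro k
    have := (hp k).symm.trans (htrk k)
    have h2 : ((p k : ℂ)) = ((∑ i, (lam i) ^ k : ℝ) : ℂ) := by
      rw [this]; push_cast; ring
    exact_mod_cast h2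
  -- sum of eigenvalues is 1
  have hsum1 : ∑ i, lam i = 1 := by
    have h1 : (X ^ 1).trace = 1 := by rw [pow_one, htr]
    have := (htrk 1).symm.trans h1
    have h2 : ((∑ i, lam i : ℝ) : ℂ) = (1 : ℂ) := by push_cast; simpa using this
    exact_mod_cast h2
  -- some eigenvalue is positive
  obtain ⟨j, hj⟩ : ∃ j, 0 < lam j := by
    by_contra h
    push_neg at h
    have : ∑ i, lam i = 0 := Finset.sum_eq_zero fun i _ => le_antisymm (h i) (hnn i)
    rw [hsum1] at this; norm_num at this
  -- positivity of p k
  have hppos : ∀ k, 0 < p k := by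
    intro k
    rw [hpk]
    exact Finset.sum_pos' (fun i _ => pow_nonneg (hnn i) k)
      ⟨j, Finset.mem_univ j, pow_pos hj k⟩
  -- Cauchy–Schwarz: p (k+1) ^ 2 ≤ p (k+2) * p k
  have hcs : ∀ k, p (k + 1) ^ 2 ≤ p (k + 2) * p k := by
    intro k
    rw [hpk, hpk, hpk]
    exact Finset.sum_sq_le_sum_mul_sum_of_sq_eq_mul Finset.univ
      (fun i _ => pow_nonneg (hnn i) _) (fun i _ => pow_nonneg (hnn i) _)
      (fun i _ => by rw [← pow_mul, ← pow_add]; ring_nf)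
  -- p 1 = 1
  have hp1 : p 1 = 1 := by
    have h1 : (X ^ 1).trace = 1 := by rw [pow_one, htr]
    have := (hp 1).symm.trans h1
    exact_mod_cast this
  -- main induction: ∀ m, p (m+3) ^ (m+1) ≥ p (m+2) ^ (m+2)
  have main : ∀ m : ℕ, p (m + 2) ^ (m + 2) ≤ p (m + 3) ^ (m + 1) := by
    intro m
    induction m with
    | zero =>
      have := hcs 1
      simpa [hp1] using this
    | succ m ih =>
      -- want: p (m+3) ^ (m+3) ≤ p (m+4) ^ (m+2)
      have hcs' := hcs (m + 2)  -- p (m+3)^2 ≤ p (m+4) * p (m+2)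
      have h1 : p (m + 3) ^ (2 * (m + 2)) ≤ (p (m + 4) * p (m + 2)) ^ (m + 2) := by
        rw [pow_mul]
        exact pow_le_pow_left₀ (sq_nonneg _) hcs' _
      have h2 : p (m + 3) ^ (m + 3) * p (m + 3) ^ (m + 1) = p (m + 3) ^ (2 * (m + 2)) := by
        rw [← pow_add]; ring_nf
      have h3 : (p (m + 4) * p (m + 2)) ^ (m + 2) = p (m + 4) ^ (m + 2) * p (m + 2) ^ (m + 2) := by
        rw [mul_pow]
      have h4 : p (m + 3) ^ (m + 3) * p (m + 3) ^ (m + 1) ≤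
          p (m + 4) ^ (m + 2) * p (m + 3) ^ (m + 1) := by
        calc p (m + 3) ^ (m + 3) * p (m + 3) ^ (m + 1)
            = p (m + 3) ^ (2 * (m + 2)) := h2
          _ ≤ p (m + 4) ^ (m + 2) * p (m + 2) ^ (m + 2) := by rw [← h3]; exact h1
          _ ≤ p (m + 4) ^ (m + 2) * p (m + 3) ^ (m + 1) := by
              exact mul_le_mul_of_nonneg_left ih (pow_nonneg (hppos (m + 4)).le _)
      exact le_of_mul_le_mul_right h4 (pow_pos (hppos (m + 3)) _)
  intro n hn
  obtain ⟨m, rfl⟩ : ∃ m, n = m + 3 := ⟨n - 3, by omega⟩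
  have : m + 3 - 2 = m + 1 := by omega
  rw [this, show m + 3 - 1 = m + 2 by omega]
  exact main m
end

section
/- There do not exist a finite-dimensional quantum state ρ ≥ 0 and Hermitian observable X such that Tr(ρ X^k) = m_k for k = 0,...,4 with (m_0, m_1, m_2, m_3, m_4) = (1, 1, 1, 1, 2), even though the Hankel matrix H_2 with rows (1,1,1),(1,1,1),(1,1,2) is positive semidefinite. -/
open ComplexOrder Matrix

lemma aux_trace_mul_conjTranspose_eq_zero {d : ℕ} (B : Matrix (Fin d) (Fin d) ℂ)
    (h : (B * Bᴴ).trace = 0) : B = 0 := by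
  have h2 : ∑ i, ∑ j, Complex.normSq (B i j) = 0 := by
    have : (B * Bᴴ).trace = ((∑ i, ∑ j, Complex.normSq (B i j) : ℝ) : ℂ) := by
      simp [Matrix.trace, Matrix.diag, Matrix.mul_apply, Matrix.conjTranspose_apply,
        Complex.mul_conj]
    rw [this] at h
    exact_mod_cast h
  ext i j
  have hij : Complex.normSq (B i j) = 0 := by
    have h1 : ∀ i ∈ (Finset.univ : Finset (Fin d)), (0:ℝ) ≤ ∑ j, Complex.normSq (B i j) :=
      fun i _ => Finset.sum_nonneg fun j _ => Complex.normSq_nonneg _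
    have := (Finset.sum_eq_zero_iff_of_nonneg h1).mp h2 i (Finset.mem_univ i)
    have h3 : ∀ j ∈ (Finset.univ : Finset (Fin d)), (0:ℝ) ≤ Complex.normSq (B i j) :=
      fun j _ => Complex.normSq_nonneg _
    exact (Finset.sum_eq_zero_iff_of_nonneg h3).mp this j (Finset.mem_univ j)
  simpa using Complex.normSq_eq_zero.mp hij

theorem no_representation_11112 :
    ¬ ∃ (d : ℕ) (ρ X : Matrix (Fin d) (Fin d) ℂ),
      ρ.PosSemidef ∧ X.IsHermitian ∧
      (ρ * X ^ 0).trace = 1 ∧ (ρ * X ^ 1).trace = 1 ∧ (ρ * X ^ 2).trace = 1 ∧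
      (ρ * X ^ 3).trace = 1 ∧ (ρ * X ^ 4).trace = 2 := by
  rintro ⟨d, ρ, X, hρ, hX, h0, h1, h2, h3, h4⟩
  set s := (open scoped MatrixOrder in CFC.sqrt ρ) with hs
  set Y : Matrix (Fin d) (Fin d) ℂ := X - 1 with hY
  have hYherm : Y.IsHermitian := hX.sub Matrix.isHermitian_one
  have hsherm : s.IsHermitian := (open scoped MatrixOrder in (CFC.sqrt_nonneg ρ).posSemidef.isHermitian)
  have hss : s * s = ρ := (open scoped MatrixOrder in CFC.sqrt_mul_sqrt_self ρ hρ.nonneg)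
  -- trace of ρ * Y^2 is zero
  have htr : (ρ * (Y * Y)).trace = 0 := by
    have : ρ * (Y * Y) = ρ * X ^ 2 - ρ * X ^ 1 - (ρ * X ^ 1 - ρ * X ^ 0) := by
      simp only [hY]; noncomm_ring
    rw [this]
    simp only [Matrix.trace_sub, h0, h1, h2]
    ring
  -- hence s * Y = 0
  have hsY : s * Y = 0 := by
    apply aux_trace_mul_conjTranspose_eq_zero
    have hconj : (s * Y)ᴴ = Y * s := by
      rw [Matrix.conjTranspose_mul, hYherm.eq, hsherm.eq]
    rw [hconj]
    have e1 : s * Y * (Y * s) = (s * Y * Y) * s := by noncomm_ring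
    have e2 : s * (s * Y * Y) = ρ * (Y * Y) := by rw [← hss]; noncomm_ring
    rw [e1, Matrix.trace_mul_comm, e2, htr]
  have hρY : ρ * Y = 0 := by
    rw [← hss, Matrix.mul_assoc, hsY, Matrix.mul_zero]
  have hρX : ρ * X = ρ := by
    have := hρY
    rw [hY, Matrix.mul_sub, Matrix.mul_one, sub_eq_zero] at this
    exact this
  have hpow : ρ * X ^ 4 = ρ := by
    have h' : ∀ n : ℕ, ρ * X ^ n = ρ := by
      intro n
      induction n with
      | zero => simp
      | succ k ih => rw [pow_succ, ← Matrix.mul_assoc, ih, hρX]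
    exact h' 4
  rw [hpow] at h4
  have : (ρ * X ^ 0).trace = ρ.trace := by simp
  rw [this, h4] at h0
  norm_num at h0
end

section
/- There do not exist a finite-dimensional quantum state ρ ≥ 0 with Tr(ρ) = 1 and a positive semidefinite observable X ≥ 0 such that Tr(ρ X^k) = m_k for k = 0,...,4 with (m_0, m_1, m_2, m_3, m_4) = (1, 1, 2, 4, 9). -/
open ComplexOrder Matrix

/-- If `(Bᴴ * B).trace = 0` then `B = 0`. -/
lemma aux_trace_ct_mul_self_eq_zero {d : ℕ} (B : Matrix (Fin d) (Fin d) ℂ)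
    (h : (Bᴴ * B).trace = 0) : B = 0 := by
  have hexp : (Bᴴ * B).trace = ∑ j, ∑ i, star (B i j) * B i j := by
    simp [Matrix.trace, Matrix.mul_apply, Matrix.conjTranspose_apply, Matrix.diag]
  rw [hexp] at h
  have hnn : ∀ j ∈ Finset.univ, (0:ℂ) ≤ ∑ i, star (B i j) * B i j := by
    intro j _
    exact Finset.sum_nonneg fun i _ => star_mul_self_nonneg _
  have h1 := (Finset.sum_eq_zero_iff_of_nonneg hnn).mp h
  ext i j
  have h2 := h1 j (Finset.mem_univ j)
  have hnn2 : ∀ i ∈ Finset.univ, (0:ℂ) ≤ star (B i j) * B i j := by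
    intro i _; exact star_mul_self_nonneg _
  have h3 := (Finset.sum_eq_zero_iff_of_nonneg hnn2).mp h2 i (Finset.mem_univ i)
  have h4 : B i j = 0 := by
    by_contra hne
    exact hne (by simpa using (CStarRing.star_mul_self_eq_zero_iff (B i j)).mp h3)
  simpa using h4

lemma aux_psd_sqrt {d : ℕ} {A : Matrix (Fin d) (Fin d) ℂ} (hA : A.PosSemidef) :
    ∃ s : Matrix (Fin d) (Fin d) ℂ, sᴴ = s ∧ s * s = A := by
  open scoped MatrixOrder in
  exact ⟨CFC.sqrt A, (CFC.sqrt_nonneg A).posSemidef.1, CFC.sqrt_mul_sqrt_self A hA.nonneg⟩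

/-- If `ρ` and `N` are PSD and `(ρ * N).trace = 0` then `ρ * N = 0`. -/
lemma aux_trace_mul_psd_eq_zero {d : ℕ} {ρ N : Matrix (Fin d) (Fin d) ℂ}
    (hρ : ρ.PosSemidef) (hN : N.PosSemidef) (h : (ρ * N).trace = 0) : ρ * N = 0 := by
  obtain ⟨s, hsH, hss⟩ := aux_psd_sqrt hρ
  obtain ⟨t, htH, htt⟩ := aux_psd_sqrt hN
  have hct : (t * s)ᴴ = s * t := by rw [Matrix.conjTranspose_mul, hsH, htH]
  have htr : ((t * s)ᴴ * (t * s)).trace = 0 := by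
    rw [hct]
    have : s * t * (t * s) = s * (t * t) * s := by noncomm_ring
    rw [this, htt]
    calc (s * N * s).trace = (s * s * N).trace := by
          rw [Matrix.trace_mul_cycle]
      _ = 0 := by rw [hss, h]
  have hts : t * s = 0 := aux_trace_ct_mul_self_eq_zero _ htr
  have hst : s * t = 0 := by rw [← hct, hts]; simp
  calc ρ * N = s * (s * t) * t := by rw [← hss, ← htt]; noncomm_ring
    _ = 0 := by rw [hst]; simp

theorem no_representation_11249 :
    ¬ ∃ (d : ℕ) (ρ X : Matrix (Fin d) (Fin d) ℂ),
      ρ.PosSemidef ∧ ρ.trace = 1 ∧ X.PosSemidef ∧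
      (ρ * X ^ 0).trace = 1 ∧ (ρ * X ^ 1).trace = 1 ∧ (ρ * X ^ 2).trace = 2 ∧
      (ρ * X ^ 3).trace = 4 ∧ (ρ * X ^ 4).trace = 9 := by
  rintro ⟨d, ρ, X, hρ, -, hX, -, h1, h2, h3, h4⟩
  set N : Matrix (Fin d) (Fin d) ℂ := (2 - X) * X * (2 - X) with hNdef
  -- N is PSD
  have hXH : Xᴴ = X := hX.1
  obtain ⟨r, hsH, hss⟩ := aux_psd_sqrt hX
  have h2H : ((2 : Matrix (Fin d) (Fin d) ℂ) - X)ᴴ = 2 - X := by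
    rw [Matrix.conjTranspose_sub, hXH]
    norm_num
  have hNpsd : N.PosSemidef := by
    have : N = (r * (2 - X))ᴴ * (r * (2 - X)) := by
      rw [Matrix.conjTranspose_mul, h2H, hsH, hNdef]
      calc (2 - X) * X * (2 - X) = (2 - X) * (r * r) * (2 - X) := by rw [hss]
        _ = (2 - X) * r * (r * (2 - X)) := by noncomm_ring
    rw [this]
    exact Matrix.posSemidef_conjTranspose_mul_self _
  -- trace of ρ * N is 0
  have hexp1 : ρ * N = (4:ℂ) • (ρ * X ^ 1) - (4:ℂ) • (ρ * X ^ 2) + ρ * X ^ 3 := by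
    rw [hNdef]; noncomm_ring; module
  have htrN : (ρ * N).trace = 0 := by
    rw [hexp1, Matrix.trace_add, Matrix.trace_sub, Matrix.trace_smul, Matrix.trace_smul,
      h1, h2, h3]
    simp [smul_eq_mul]; ring
  have hρN : ρ * N = 0 := aux_trace_mul_psd_eq_zero hρ hNpsd htrN
  -- but trace of ρ * (X * N) should be 1 and also 0
  have hXN : X * N = N * X := by rw [hNdef]; noncomm_ring
  have hzero : ρ * (X * N) = 0 := by
    rw [hXN, ← mul_assoc, hρN, zero_mul]
  have hexp2 : ρ * (X * N) = (4:ℂ) • (ρ * X ^ 2) - (4:ℂ) • (ρ * X ^ 3) + ρ * X ^ 4 := by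
    rw [hNdef]; noncomm_ring; module
  have : (0 : ℂ) = 1 := by
    calc (0:ℂ) = (ρ * (X * N)).trace := by rw [hzero, Matrix.trace_zero]
      _ = (4:ℂ) * 2 - (4:ℂ) * 4 + 9 := by
          rw [hexp2, Matrix.trace_add, Matrix.trace_sub, Matrix.trace_smul, Matrix.trace_smul,
            h2, h3, h4]
          simp [smul_eq_mul]
      _ = 1 := by norm_num
  exact zero_ne_one this
end

section
/- The moment sequence (1, 1, 1, 1, 2) is a limit of moment sequences realized by pure states: for the pure state |φ_ε⟩ = √(1−ε)|0⟩ + √ε|1⟩ and observable X_ε = diag(1, ε^{-1/4}) on C², one has ⟨φ_ε| X_ε^k |φ_ε⟩ → m_k as ε → 0⁺ for k = 0,...,4, where (m_0,...,m_4) = (1,1,1,1,2). -/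
open Filter Matrix

theorem moments_11112_as_limit :
    ∀ k : ℕ, k ≤ 4 →
      Tendsto
        (fun ε : ℝ =>
          (![Real.sqrt (1 - ε), Real.sqrt ε]) ⬝ᵥ
            (((Matrix.diagonal ![1, ε ^ (-(1 : ℝ) / 4)]) ^ k).mulVec
              ![Real.sqrt (1 - ε), Real.sqrt ε]))
        (nhdsWithin 0 (Set.Ioo 0 1))
        (nhds (if k = 4 then 2 else 1)) := by
  intro k hk
  have hcongr : ∀ ε ∈ Set.Ioo (0:ℝ) 1,
      (![Real.sqrt (1 - ε), Real.sqrt ε]) ⬝ᵥ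
        (((Matrix.diagonal ![1, ε ^ (-(1 : ℝ) / 4)]) ^ k).mulVec
          ![Real.sqrt (1 - ε), Real.sqrt ε])
      = (1 - ε) + ε ^ (1 - (k : ℝ)/4) := by
    intro ε hε
    obtain ⟨h0, h1⟩ := hε
    have h1' : (0:ℝ) ≤ 1 - ε := by linarith
    rw [Matrix.diagonal_pow]
    simp only [dotProduct, Matrix.mulVec_diagonal, Fin.sum_univ_two,
      Matrix.cons_val_zero, Matrix.cons_val_one, Matrix.head_cons, Pi.pow_apply]
    rw [one_pow, ← Real.rpow_natCast (ε ^ (-(1:ℝ)/4)) k, ← Real.rpow_mul h0.le]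
    have : Real.sqrt (1 - ε) * (1 * Real.sqrt (1 - ε)) = 1 - ε := by
      rw [one_mul, Real.mul_self_sqrt h1']
    rw [this]
    have hx : Real.sqrt ε * (ε ^ (-(1:ℝ)/4 * k) * Real.sqrt ε)
        = ε ^ (-(1:ℝ)/4 * k) * ε := by
      ring_nf
      rw [Real.sq_sqrt h0.le]
      ring
    rw [hx, show (1 - (k:ℝ)/4) = (-(1:ℝ)/4 * k) + 1 by ring, Real.rpow_add h0,
      Real.rpow_one]
  apply Tendsto.congr' (Filter.eventuallyEq_of_mem self_mem_nhdsWithin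
    (fun ε hε => (hcongr ε hε).symm))
  have hbase : Tendsto (fun ε : ℝ => 1 - ε) (nhdsWithin 0 (Set.Ioo 0 1)) (nhds 1) := by
    have : Tendsto (fun ε : ℝ => 1 - ε) (nhds 0) (nhds 1) := by
      have h := ((continuous_const (y := (1:ℝ))).sub continuous_id).tendsto (0:ℝ)
      simpa [Pi.sub_def] using h
    exact this.mono_left nhdsWithin_le_nhds
  by_cases h4 : k = 4
  · subst h4
    simp only [if_true]
    have : ∀ ε ∈ Set.Ioo (0:ℝ) 1, (1 - ε) + ε ^ (1 - (4:ℕ) / 4 : ℝ) = (1 - ε) + 1 := by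
      intro ε hε
      norm_num
    apply Tendsto.congr' (Filter.eventuallyEq_of_mem self_mem_nhdsWithin
      (fun ε hε => (this ε hε).symm))
    have h := hbase.add (tendsto_const_nhds (x := (1:ℝ)))
    exact (by norm_num : (2:ℝ) = 1 + 1) ▸ h
  · simp only [if_neg h4]
    have ha : (0:ℝ) < 1 - (k : ℝ)/4 := by
      have : (k:ℝ) < 4 := by exact_mod_cast lt_of_le_of_ne hk h4
      linarith
    have hpow : Tendsto (fun ε : ℝ => ε ^ (1 - (k : ℝ)/4)) (nhdsWithin 0 (Set.Ioo 0 1))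
        (nhds 0) := by
      have hc : ContinuousAt (fun x : ℝ => x ^ (1 - (k : ℝ)/4)) 0 :=
        Real.continuousAt_rpow_const 0 _ (Or.inr ha.le)
      have := hc.tendsto.mono_left (nhdsWithin_le_nhds (s := Set.Ioo (0:ℝ) 1))
      rwa [Real.zero_rpow ha.ne'] at this
    simpa using hbase.add hpow
end

section
/- Let x_1, ..., x_d be nonnegative reals with Σ x_i = 1 and Σ x_i^2 = p_2, and let α = ⌊1/p_2⌋ with p_2 > 1/d... Then Σ x_i^3 ≥ α x³ + (1 − αx)³, where x = (α + √(α[p_2(α+1) − 1]))/(α(α+1)). -/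
lemma cube_diff (a b c a' b' c' : ℝ) (h1 : a + b + c = a' + b' + c')
    (h2 : a^2 + b^2 + c^2 = a'^2 + b'^2 + c'^2) :
    a^3 + b^3 + c^3 - (a'^3 + b'^3 + c'^3) = 3 * (a*b*c - a'*b'*c') := by
  linear_combination (3/2*(a+b+c)) * h2 +
    (3/2*(a'^2+b'^2+c'^2) - 1/2*((a+b+c)^2 + (a+b+c)*(a'+b'+c') + (a'+b'+c')^2)) * h1

lemma exchange (a b c : ℝ) (hc : 0 < c) (hcb : c ≤ b) (hba : b < a) :
    ∃ p q r : ℝ, 0 ≤ p ∧ 0 ≤ q ∧ 0 ≤ r ∧ p + q + r = a + b + c ∧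
      p^2 + q^2 + r^2 = a^2 + b^2 + c^2 ∧ p^3 + q^3 + r^3 < a^3 + b^3 + c^3 := by
  have hb : 0 < b := hc.trans_le hcb
  have ha : 0 < a := hb.trans hba
  by_cases hcase : 2*(a^2+b^2+c^2) ≤ (a+b+c)^2
  · -- pair-high replacement
    set D : ℝ := 6*(a^2+b^2+c^2) - 2*(a+b+c)^2 with hDdef
    have hD : 0 < D := by nlinarith [sq_nonneg (a-b), sq_nonneg (b-c), sq_nonneg (a-c)]
    set r : ℝ := Real.sqrt D with hrdef
    have hr2 : r^2 = D := Real.sq_sqrt hD.le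
    have hr0 : 0 < r := Real.sqrt_pos.2 hD
    have hrσ : r ≤ a + b + c := by
      have h1 : D ≤ (a+b+c)^2 := by nlinarith
      calc r ≤ Real.sqrt ((a+b+c)^2) := Real.sqrt_le_sqrt h1
        _ = a+b+c := Real.sqrt_sq (by positivity)
    set u : ℝ := (2*(a+b+c) + r)/6 with hudef
    set v : ℝ := ((a+b+c) - r)/3 with hvdef
    have hu0 : 0 ≤ u := by positivity
    have hv0 : 0 ≤ v := by rw [hvdef]; linarith
    have hvu : v < u := by rw [hudef, hvdef]; linarith
    have h1 : u + u + v = a + b + c := by rw [hudef, hvdef]; ring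
    have h2 : u^2 + u^2 + v^2 = a^2 + b^2 + c^2 := by
      rw [hudef, hvdef]; linear_combination (1/6) * hr2
    -- key identities
    have keyA : (a-u)^2*(a-v) = a*b*c - u^2*v := by
      linear_combination (a^2 - a*((a+b+c)+(u+u+v))/2) * h1.symm + (a/2) * h2.symm
    have keyB : (b-u)^2*(b-v) = a*b*c - u^2*v := by
      linear_combination (b^2 - b*((a+b+c)+(u+u+v))/2) * h1.symm + (b/2) * h2.symm
    have keyC : (c-u)^2*(c-v) = a*b*c - u^2*v := by
      linear_combination (c^2 - c*((a+b+c)+(u+u+v))/2) * h1.symm + (c/2) * h2.symm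
    have hΔ : 0 < a*b*c - u^2*v := by
      rcases lt_trichotomy (a*b*c - u^2*v) 0 with h | h | h
      · exfalso
        have hav : a < v := by
          by_contra h'; push_neg at h'
          have : 0 ≤ (a-u)^2*(a-v) := mul_nonneg (sq_nonneg _) (by linarith)
          linarith [keyA]
        have hbv : b < v := by
          by_contra h'; push_neg at h'
          have : 0 ≤ (b-u)^2*(b-v) := mul_nonneg (sq_nonneg _) (by linarith)
          linarith [keyB]
        have hcv : c < v := by
          by_contra h'; push_neg at h'
          have : 0 ≤ (c-u)^2*(c-v) := mul_nonneg (sq_nonneg _) (by linarith)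
          linarith [keyC]
        linarith
      · exfalso
        have fA : a = u ∨ a = v := by
          rcases mul_eq_zero.mp (by linarith [keyA] : (a-u)^2*(a-v) = 0) with h' | h'
          · left; have := pow_eq_zero_iff (n := 2) (by norm_num) |>.mp h'; linarith
          · right; linarith
        have fB : b = u ∨ b = v := by
          rcases mul_eq_zero.mp (by linarith [keyB] : (b-u)^2*(b-v) = 0) with h' | h'
          · left; have := pow_eq_zero_iff (n := 2) (by norm_num) |>.mp h'; linarith
          · right; linarith
        have fC : c = u ∨ c = v := by
          rcases mul_eq_zero.mp (by linarith [keyC] : (c-u)^2*(c-v) = 0) with h' | h'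
          · left; have := pow_eq_zero_iff (n := 2) (by norm_num) |>.mp h'; linarith
          · right; linarith
        rcases fA with hA | hA <;> rcases fB with hB | hB <;> rcases fC with hC | hC <;>
          linarith
      · exact h
    refine ⟨u, u, v, hu0, hu0, hv0, h1, h2, ?_⟩
    have := cube_diff a b c u u v h1.symm h2.symm
    linarith
  · -- boundary replacement
    push_neg at hcase
    set R : ℝ := 2*(a^2+b^2+c^2) - (a+b+c)^2 with hRdef
    have hR : 0 < R := by linarith
    set r : ℝ := Real.sqrt R with hrdef
    have hr2 : r^2 = R := Real.sq_sqrt hR.le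
    have hrσ : r ≤ a + b + c := by
      have h1 : R ≤ (a+b+c)^2 := by nlinarith [mul_pos ha hb, mul_pos hb hc, mul_pos ha hc]
      calc r ≤ Real.sqrt ((a+b+c)^2) := Real.sqrt_le_sqrt h1
        _ = a+b+c := Real.sqrt_sq (by positivity)
    refine ⟨(a+b+c+r)/2, (a+b+c-r)/2, 0, by positivity, by linarith, le_refl 0, by ring, ?_, ?_⟩
    · linear_combination (1/2) * hr2
    · have h1 : (a+b+c+r)/2 + (a+b+c-r)/2 + 0 = a + b + c := by ring
      have h2 : ((a+b+c+r)/2)^2 + ((a+b+c-r)/2)^2 + 0^2 = a^2 + b^2 + c^2 := by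
        linear_combination (1/2) * hr2
      have := cube_diff a b c ((a+b+c+r)/2) ((a+b+c-r)/2) 0 h1.symm h2.symm
      nlinarith [mul_pos (mul_pos ha hb) hc]


lemma sum_three_update {d : ℕ} (w : Fin d → ℝ) (i j l : Fin d)
    (hij : i ≠ j) (hil : i ≠ l) (hjl : j ≠ l) (p q r : ℝ) (f : ℝ → ℝ) :
    ∑ m, f (if m = i then p else if m = j then q else if m = l then r else w m) =
      (∑ m, f (w m)) - f (w i) - f (w j) - f (w l) + (f p + f q + f r) := by
  classical
  have hlm : l ∈ (Finset.univ.erase i).erase j :=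
    Finset.mem_erase.2 ⟨hjl.symm, Finset.mem_erase.2 ⟨hil.symm, Finset.mem_univ l⟩⟩
  have hjm : j ∈ Finset.univ.erase i := Finset.mem_erase.2 ⟨hij.symm, Finset.mem_univ j⟩
  have base : ∀ g : Fin d → ℝ, ∑ m, g m =
      (∑ m ∈ ((Finset.univ.erase i).erase j).erase l, g m) + g l + g j + g i := by
    intro g
    rw [← Finset.sum_erase_add Finset.univ g (Finset.mem_univ i),
      ← Finset.sum_erase_add (Finset.univ.erase i) g hjm,
      ← Finset.sum_erase_add ((Finset.univ.erase i).erase j) g hlm]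
  rw [base (fun m => f (if m = i then p else if m = j then q else if m = l then r else w m)),
    base (fun m => f (w m))]
  have hs : ∑ m ∈ ((Finset.univ.erase i).erase j).erase l,
      f (if m = i then p else if m = j then q else if m = l then r else w m) =
      ∑ m ∈ ((Finset.univ.erase i).erase j).erase l, f (w m) := by
    refine Finset.sum_congr rfl fun m hm => ?_
    have h1 : m ≠ l := (Finset.mem_erase.mp hm).1
    have h2 : m ≠ j := (Finset.mem_erase.mp (Finset.mem_erase.mp hm).2).1
    have h3 : m ≠ i := (Finset.mem_erase.mp (Finset.mem_erase.mp (Finset.mem_erase.mp hm).2).2).1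
    simp [h1, h2, h3]
  rw [hs]
  simp [hil.symm, hjl.symm, hij.symm, if_neg]
  ring

lemma shape {d : ℕ} (p2 : ℝ) (y : Fin d → ℝ) (hy0 : ∀ i, 0 ≤ y i)
    (hy1 : ∑ i, y i = 1) (hy2 : ∑ i, (y i)^2 = p2)
    (hmin : ∀ z : Fin d → ℝ, (∀ i, 0 ≤ z i) → ∑ i, z i = 1 → ∑ i, (z i)^2 = p2 →
      ∑ i, (y i)^3 ≤ ∑ i, (z i)^3) :
    ∃ (k : ℕ) (u v : ℝ), 1 ≤ k ∧ 0 < u ∧ 0 ≤ v ∧ v ≤ u ∧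
      (k:ℝ)*u + v = 1 ∧ (k:ℝ)*u^2 + v^2 = p2 ∧ (k:ℝ)*u^3 + v^3 = ∑ i, (y i)^3 := by
  classical
  set P : Finset (Fin d) := Finset.univ.filter fun i => 0 < y i with hPdef
  have hPsum : ∀ f : ℝ → ℝ, f 0 = 0 → ∑ i, f (y i) = ∑ i ∈ P, f (y i) := by
    intro f hf
    refine (Finset.sum_subset (Finset.subset_univ P) fun i _ hiP => ?_).symm
    have : ¬ 0 < y i := by simpa [hPdef] using hiP
    have : y i = 0 := le_antisymm (by linarith) (hy0 i)
    rw [this, hf]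
  have hPne : P.Nonempty := by
    by_contra h
    rw [Finset.not_nonempty_iff_eq_empty] at h
    have := hPsum (fun x => x) rfl
    rw [h, Finset.sum_empty, hy1] at this
    norm_num at this
  obtain ⟨i₀, hi₀P, hi₀max⟩ := P.exists_max_image y hPne
  have hu : 0 < y i₀ := (Finset.mem_filter.mp hi₀P).2
  by_cases hcard : P.card = 1
  · obtain ⟨a, ha⟩ := Finset.card_eq_one.mp hcard
    have hai : i₀ = a := by rw [ha] at hi₀P; exact Finset.mem_singleton.mp hi₀P
    have hsum : ∀ f : ℝ → ℝ, f 0 = 0 → ∑ i, f (y i) = f (y i₀) := by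
      intro f hf
      rw [hPsum f hf, ha, Finset.sum_singleton, hai]
    have h1 : y i₀ = 1 := by have := hsum (fun x => x) rfl; linarith
    refine ⟨1, 1, 0, le_refl 1, one_pos, le_refl 0, zero_le_one, by norm_num, ?_, ?_⟩
    · have := hsum (fun x => x^2) (by norm_num)
      rw [h1] at this; rw [← hy2, this]; norm_num
    · have := hsum (fun x => x^3) (by norm_num)
      rw [h1] at this; rw [this]; norm_num
  · have hcard2 : 2 ≤ P.card := by
      have := Finset.card_pos.mpr hPne; omega
    have hP'ne : (P.erase i₀).Nonempty := by
      rw [← Finset.card_pos, Finset.card_erase_of_mem hi₀P]; omega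
    obtain ⟨j₀, hj₀P', hj₀min⟩ := (P.erase i₀).exists_min_image y hP'ne
    have hj₀P : j₀ ∈ P := Finset.mem_of_mem_erase hj₀P'
    have hj₀i₀ : j₀ ≠ i₀ := (Finset.mem_erase.mp hj₀P').1
    have hv : 0 < y j₀ := (Finset.mem_filter.mp hj₀P).2
    have hvu : y j₀ ≤ y i₀ := hi₀max j₀ hj₀P
    have hC : ∀ i ∈ P.erase j₀, y i = y i₀ := by
      intro i hiQ
      have hiP : i ∈ P := Finset.mem_of_mem_erase hiQ
      have hij₀ : i ≠ j₀ := (Finset.mem_erase.mp hiQ).1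
      by_cases hii₀ : i = i₀
      · rw [hii₀]
      · by_contra hne
        have hiu : y i < y i₀ := lt_of_le_of_ne (hi₀max i hiP) hne
        have hiP' : i ∈ P.erase i₀ := Finset.mem_erase.2 ⟨hii₀, hiP⟩
        have hvyi : y j₀ ≤ y i := hj₀min i hiP'
        obtain ⟨p, q, r, hp, hq, hr, hsum3, hsq3, hcube3⟩ :=
          exchange (y i₀) (y i) (y j₀) hv hvyi hiu
        set z : Fin d → ℝ :=
          fun m => if m = i₀ then p else if m = i then q else if m = j₀ then r else y m with hzdef
        have hii₀' : i₀ ≠ i := fun h => hii₀ h.symm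
        have hkey : ∀ f : ℝ → ℝ, ∑ m, f (z m) =
            (∑ m, f (y m)) - f (y i₀) - f (y i) - f (y j₀) + (f p + f q + f r) :=
          fun f => sum_three_update y i₀ i j₀ hii₀' hj₀i₀.symm hij₀ p q r f
        have hz0 : ∀ m, 0 ≤ z m := by
          intro m
          rw [hzdef]
          dsimp only
          split_ifs
          · exact hp
          · exact hq
          · exact hr
          · exact hy0 m
        have hk1 : ∑ m, z m = (∑ m, y m) - y i₀ - y i - y j₀ + (p + q + r) := by
          simpa using hkey (fun x => x)
        have hk2 : ∑ m, (z m)^2 =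
            (∑ m, (y m)^2) - (y i₀)^2 - (y i)^2 - (y j₀)^2 + (p^2 + q^2 + r^2) := by
          simpa using hkey (fun x => x^2)
        have hk3 : ∑ m, (z m)^3 =
            (∑ m, (y m)^3) - (y i₀)^3 - (y i)^3 - (y j₀)^3 + (p^3 + q^3 + r^3) := by
          simpa using hkey (fun x => x^3)
        have hz1 : ∑ m, z m = 1 := by rw [hk1, hy1]; linarith
        have hz2 : ∑ m, (z m)^2 = p2 := by rw [hk2, hy2]; linarith
        have hz3 : ∑ m, (z m)^3 < ∑ m, (y m)^3 := by rw [hk3]; linarith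
        exact absurd (hmin z hz0 hz1 hz2) (by linarith)
    have hsplit : ∀ f : ℝ → ℝ, f 0 = 0 →
        ∑ i, f (y i) = ((P.erase j₀).card : ℝ) * f (y i₀) + f (y j₀) := by
      intro f hf
      rw [hPsum f hf, ← Finset.sum_erase_add P _ hj₀P,
        Finset.sum_congr rfl (fun i hi => by rw [hC i hi]),
        Finset.sum_const, nsmul_eq_mul]
    have e1 : ∑ i, y i = ((P.erase j₀).card : ℝ) * y i₀ + y j₀ := by
      simpa using hsplit (fun x => x) rfl
    have e2 : ∑ i, (y i)^2 = ((P.erase j₀).card : ℝ) * (y i₀)^2 + (y j₀)^2 := by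
      simpa using hsplit (fun x => x^2) (by norm_num)
    have e3 : ∑ i, (y i)^3 = ((P.erase j₀).card : ℝ) * (y i₀)^3 + (y j₀)^3 := by
      simpa using hsplit (fun x => x^3) (by norm_num)
    refine ⟨(P.erase j₀).card, y i₀, y j₀, ?_, hu, hv.le, hvu, ?_, ?_, ?_⟩
    · rw [Finset.card_erase_of_mem hj₀P]; omega
    · rw [← e1, hy1]
    · rw [← e2, hy2]
    · exact e3.symm


set_option maxHeartbeats 1000000 in
lemma final_calc (k α : ℕ) (u v p2 t : ℝ) (hk : 1 ≤ k) (hu : 0 < u) (hv : 0 ≤ v)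
    (hvu : v ≤ u) (hs : (k:ℝ)*u + v = 1) (hq : (k:ℝ)*u^2 + v^2 = p2)
    (hα0 : 1 ≤ α) (hα1 : (α:ℝ) ≤ 1/p2) (hα2 : 1/p2 < (α:ℝ)+1)
    (ht : (α:ℝ)*((α:ℝ)+1)*t = (α:ℝ) + Real.sqrt ((α:ℝ)*(p2*((α:ℝ)+1)-1))) :
    (α:ℝ)*t^3 + (1-(α:ℝ)*t)^3 ≤ (k:ℝ)*u^3 + v^3 := by
  have hkR : (1:ℝ) ≤ (k:ℝ) := by exact_mod_cast hk
  have hαR : (1:ℝ) ≤ (α:ℝ) := by exact_mod_cast hα0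
  have hp2pos : 0 < p2 := by nlinarith [mul_pos hu hu, sq_nonneg v]
  have hv' : v = 1 - (k:ℝ)*u := by linarith
  have hquad : (k:ℝ)*((k:ℝ)+1)*u^2 - 2*(k:ℝ)*u + 1 - p2 = 0 := by
    rw [hv'] at hq; linear_combination hq
  have hDsq : ((k:ℝ)*((k:ℝ)+1)*u - (k:ℝ))^2 = (k:ℝ)*(((k:ℝ)+1)*p2 - 1) := by
    linear_combination ((k:ℝ)*((k:ℝ)+1)) * hquad
  have hD0 : 0 ≤ (k:ℝ)*(((k:ℝ)+1)*p2 - 1) := hDsq ▸ sq_nonneg _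
  have hk1p2 : 1 ≤ ((k:ℝ)+1)*p2 := by nlinarith
  have hku : (k:ℝ)*u ≤ 1 := by linarith
  have h1ku : 1 ≤ ((k:ℝ)+1)*u := by nlinarith
  have hA0 : 0 ≤ (k:ℝ)*((k:ℝ)+1)*u - (k:ℝ) := by nlinarith
  have hA1 : (k:ℝ)*((k:ℝ)+1)*u - (k:ℝ) ≤ 1 := by nlinarith
  have hkp2 : (k:ℝ)*p2 ≤ 1 := by nlinarith [hDsq]
  have hkα : k ≤ α := by
    have h1 : (k:ℝ) ≤ 1/p2 := by rw [le_div_iff₀ hp2pos]; linarith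
    have h2 : (k:ℝ) < ((α+1 : ℕ):ℝ) := by push_cast; linarith
    have := Nat.cast_lt (α := ℝ) |>.mp h2
    omega
  have hαk : α ≤ k + 1 := by
    have h1 : 1/p2 ≤ (k:ℝ)+1 := by rw [div_le_iff₀ hp2pos]; linarith
    have h2 : (α:ℝ) ≤ ((k+1 : ℕ):ℝ) := by push_cast; linarith
    exact_mod_cast h2
  have hcases : k = α ∨ α = k + 1 := by omega
  rcases hcases with hkeq | hαeq
  · -- k = α : the configuration coincides with (t,…,t,s)
    subst hkeq
    have harg : (0:ℝ) ≤ (k:ℝ)*(p2*((k:ℝ)+1)-1) := by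
      have h := hD0
      rw [show (k:ℝ)*(((k:ℝ)+1)*p2-1) = (k:ℝ)*(p2*((k:ℝ)+1)-1) from by ring] at h
      exact h
    have hB2 : (Real.sqrt ((k:ℝ)*(p2*((k:ℝ)+1)-1)))^2 = (k:ℝ)*(p2*((k:ℝ)+1)-1) :=
      Real.sq_sqrt harg
    have hB0 : 0 ≤ Real.sqrt ((k:ℝ)*(p2*((k:ℝ)+1)-1)) := Real.sqrt_nonneg _
    set B : ℝ := Real.sqrt ((k:ℝ)*(p2*((k:ℝ)+1)-1)) with hBdef
    have hAB : (k:ℝ)*((k:ℝ)+1)*u - (k:ℝ) = B := by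
      have h0 : (((k:ℝ)*((k:ℝ)+1)*u - (k:ℝ)) - B) * (((k:ℝ)*((k:ℝ)+1)*u - (k:ℝ)) + B) = 0 := by
        linear_combination hDsq - hB2
      rcases mul_eq_zero.mp h0 with h' | h'
      · linarith
      · linarith
    have hut : u = t := by
      have hne : (k:ℝ)*((k:ℝ)+1) ≠ 0 := ne_of_gt (by nlinarith)
      have : (k:ℝ)*((k:ℝ)+1)*u = (k:ℝ)*((k:ℝ)+1)*t := by rw [ht]; linarith
      exact mul_left_cancel₀ hne this
    have hveq : v = 1 - (k:ℝ)*t := by rw [hv', hut]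
    rw [hut, hveq]
  · -- α = k+1 : degenerate case p2 = 1/(k+1), everything uniform
    have hαc : (α:ℝ) = (k:ℝ)+1 := by exact_mod_cast congrArg (Nat.cast (R := ℝ)) hαeq
    have hp2eq : ((k:ℝ)+1)*p2 = 1 := by
      have h1 : ((k:ℝ)+1)*p2 ≤ 1 := by
        have h := hα1; rw [hαc] at h
        rw [le_div_iff₀ hp2pos] at h; linarith
      linarith
    have hAz : (k:ℝ)*((k:ℝ)+1)*u - (k:ℝ) = 0 := by
      have h0 : ((k:ℝ)*((k:ℝ)+1)*u - (k:ℝ))^2 = 0 := by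
        rw [hDsq]; nlinarith [hp2eq]
      exact pow_eq_zero_iff (n := 2) (by norm_num) |>.mp h0
    have hk0 : (k:ℝ) ≠ 0 := ne_of_gt (by linarith)
    have hueq : ((k:ℝ)+1)*u = 1 := by
      have h : (k:ℝ)*(((k:ℝ)+1)*u) = (k:ℝ)*1 := by linear_combination hAz
      exact mul_left_cancel₀ hk0 h
    have hveq : v = u := by
      have h : (k:ℝ)*u = 1 - u := by linarith
      linarith [hv']
    have harg1 : (α:ℝ)*(p2*((α:ℝ)+1)-1) = 1 := by
      rw [hαc]; linear_combination ((k:ℝ)+2)*hp2eq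
    have hne : (α:ℝ)*((α:ℝ)+1) ≠ 0 := ne_of_gt (by nlinarith)
    have hteq : t = u := by
      have h1 : (α:ℝ)*((α:ℝ)+1)*t = (α:ℝ)+1 := by
        rw [ht, harg1, Real.sqrt_one]
      have h2 : (α:ℝ)*((α:ℝ)+1)*u = (α:ℝ)+1 := by
        rw [hαc]; nlinarith [hueq]
      exact mul_left_cancel₀ hne (h1.trans h2.symm)
    have hαu : (α:ℝ)*u = 1 := by
      rw [hαc]; linarith
    rw [hteq, hαu, hveq, hαc]
    have h3 : ((k:ℝ)+1)*u^3 = (k:ℝ)*u^3 + u^3 := by ring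
    norm_num
    linarith [h3]


theorem p3_OPPT_lower_bound (d : ℕ) (hd : 1 ≤ d) (x : Fin d → ℝ)
    (hx : ∀ i, 0 ≤ x i) (h1 : ∑ i, x i = 1)
    (p₂ : ℝ) (h2 : ∑ i, (x i) ^ 2 = p₂)
    (hp₂ : 1 / (d : ℝ) ≤ p₂ ∧ p₂ ≤ 1) :
    let α : ℕ := ⌊1 / p₂⌋₊
    let t : ℝ := ((α : ℝ) + Real.sqrt ((α : ℝ) * (p₂ * ((α : ℝ) + 1) - 1))) /
      ((α : ℝ) * ((α : ℝ) + 1))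
    ∑ i, (x i) ^ 3 ≥ (α : ℝ) * t ^ 3 + (1 - (α : ℝ) * t) ^ 3 := by
  intro α t
  classical
  have hdpos : (0:ℝ) < (d:ℝ) := by exact_mod_cast hd
  have hp2pos : 0 < p₂ := lt_of_lt_of_le (by positivity) hp₂.1
  have hα0 : 1 ≤ α := Nat.le_floor (by
    rw [Nat.cast_one, le_div_iff₀ hp2pos]; linarith [hp₂.2])
  have hαR : (1:ℝ) ≤ (α:ℝ) := by exact_mod_cast hα0
  have hα1 : (α:ℝ) ≤ 1/p₂ := Nat.floor_le (by positivity)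
  have hα2 : 1/p₂ < (α:ℝ)+1 := Nat.lt_floor_add_one _
  have hne : (α:ℝ)*((α:ℝ)+1) ≠ 0 := ne_of_gt (by nlinarith)
  have ht : (α:ℝ)*((α:ℝ)+1)*t = (α:ℝ) + Real.sqrt ((α:ℝ)*(p₂*((α:ℝ)+1)-1)) :=
    mul_div_cancel₀ _ hne
  -- compactness of the constraint set
  set K : Set (Fin d → ℝ) :=
    {y | (∀ i, 0 ≤ y i) ∧ ∑ i, y i = 1 ∧ ∑ i, (y i)^2 = p₂} with hKdef
  have hxK : x ∈ K := ⟨hx, h1, h2⟩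
  have hc1 : Continuous fun y : Fin d → ℝ => ∑ i, y i :=
    continuous_finset_sum _ fun i _ => continuous_apply i
  have hc2 : Continuous fun y : Fin d → ℝ => ∑ i, (y i)^2 :=
    continuous_finset_sum _ fun i _ => (continuous_apply i).pow 2
  have hc3 : Continuous fun y : Fin d → ℝ => ∑ i, (y i)^3 :=
    continuous_finset_sum _ fun i _ => (continuous_apply i).pow 3
  have hclosed : IsClosed K := by
    have e : K = {y : Fin d → ℝ | ∀ i, 0 ≤ y i} ∩
        ((fun y : Fin d → ℝ => ∑ i, y i) ⁻¹' {1} ∩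
          (fun y : Fin d → ℝ => ∑ i, (y i)^2) ⁻¹' {p₂}) := by
      ext y; simp [hKdef, Set.mem_setOf_eq, and_assoc]
    rw [e]
    refine IsClosed.inter ?_ (IsClosed.inter ?_ ?_)
    · have e2 : {y : Fin d → ℝ | ∀ i, 0 ≤ y i} = ⋂ i, {y : Fin d → ℝ | 0 ≤ y i} := by
        ext y; simp
      rw [e2]
      exact isClosed_iInter fun i => isClosed_le continuous_const (continuous_apply i)
    · exact (isClosed_singleton).preimage hc1
    · exact (isClosed_singleton).preimage hc2
  have hsub : K ⊆ Set.pi Set.univ (fun _ : Fin d => Set.Icc (0:ℝ) 1) := by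
    intro y hy
    obtain ⟨hy0, hy1, -⟩ := hy
    intro i _
    refine ⟨hy0 i, ?_⟩
    calc y i ≤ ∑ j, y j := Finset.single_le_sum (fun j _ => hy0 j) (Finset.mem_univ i)
      _ = 1 := hy1
  have hKcomp : IsCompact K :=
    IsCompact.of_isClosed_subset (isCompact_univ_pi fun _ => isCompact_Icc) hclosed hsub
  obtain ⟨y, hyK, hymin⟩ := hKcomp.exists_isMinOn ⟨x, hxK⟩ hc3.continuousOn
  obtain ⟨hy0, hy1, hy2⟩ := hyK
  have hmin : ∀ z : Fin d → ℝ, (∀ i, 0 ≤ z i) → ∑ i, z i = 1 → ∑ i, (z i)^2 = p₂ →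
      ∑ i, (y i)^3 ≤ ∑ i, (z i)^3 := by
    intro z hz0 hz1 hz2
    exact hymin ⟨hz0, hz1, hz2⟩
  obtain ⟨k, u, v, hk, hu, hv, hvu, hsum, hsq, hcube⟩ := shape p₂ y hy0 hy1 hy2 hmin
  have hfin := final_calc k α u v p₂ t hk hu hv hvu hsum hsq hα0 hα1 hα2 ht
  have hyx : ∑ i, (y i)^3 ≤ ∑ i, (x i)^3 := hymin hxK
  calc (α:ℝ)*t^3 + (1-(α:ℝ)*t)^3 ≤ (k:ℝ)*u^3 + v^3 := hfin
    _ = ∑ i, (y i)^3 := hcube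
    _ ≤ ∑ i, (x i)^3 := hyx
end

section
/- Let x_1, ..., x_d be nonnegative reals with Σ x_i = 1 and Σ x_i^2 = p_2 where 1/d ≤ p_2 ≤ 1. Then Σ x_i^3 ≤ [1 − (d−1)y]³ + (d−1)y³, where y = (d − 1 − √((d−1)(p_2 d − 1)))/(d(d−1)). -/
theorem p3_upper_bound_nonneg (d : ℕ) (hd : 2 ≤ d) (x : Fin d → ℝ)
    (hx : ∀ i, 0 ≤ x i) (h1 : ∑ i, x i = 1)
    (p₂ : ℝ) (h2 : ∑ i, (x i) ^ 2 = p₂)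
    (hp₂ : 1 / (d : ℝ) ≤ p₂ ∧ p₂ ≤ 1) :
    let y : ℝ := ((d : ℝ) - 1 - Real.sqrt (((d : ℝ) - 1) * (p₂ * d - 1))) /
      ((d : ℝ) * ((d : ℝ) - 1))
    ∑ i, (x i) ^ 3 ≤ (1 - ((d : ℝ) - 1) * y) ^ 3 + ((d : ℝ) - 1) * y ^ 3 := by
  intro y
  have hy : y = ((d : ℝ) - 1 - Real.sqrt (((d : ℝ) - 1) * (p₂ * d - 1))) /
      ((d : ℝ) * ((d : ℝ) - 1)) := rfl
  clear_value y
  obtain ⟨hpl, hpu⟩ := hp₂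
  have hd1 : (1:ℝ) ≤ (d:ℝ) - 1 := by
    have : (2:ℝ) ≤ (d:ℝ) := by exact_mod_cast hd
    linarith
  have hdpos : (0:ℝ) < d := by linarith
  have hdne : (d:ℝ) ≠ 0 := ne_of_gt hdpos
  have hd1ne : (d:ℝ) - 1 ≠ 0 := by linarith
  have hpd : 1 ≤ p₂ * d := by
    rw [div_le_iff₀ hdpos] at hpl; linarith
  have harg : 0 ≤ ((d : ℝ) - 1) * (p₂ * d - 1) := by nlinarith
  obtain ⟨s, hsdef⟩ : ∃ s, s = Real.sqrt (((d : ℝ) - 1) * (p₂ * d - 1)) := ⟨_, rfl⟩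
  rw [← hsdef] at hy
  have hs0 : 0 ≤ s := hsdef ▸ Real.sqrt_nonneg _
  have hs2 : s ^ 2 = ((d : ℝ) - 1) * (p₂ * d - 1) := hsdef ▸ Real.sq_sqrt harg
  have hsle : s ≤ (d:ℝ) - 1 := by
    rw [hsdef]
    calc Real.sqrt (((d : ℝ) - 1) * (p₂ * d - 1)) ≤ Real.sqrt (((d:ℝ)-1)^2) :=
          Real.sqrt_le_sqrt (by nlinarith)
      _ = (d:ℝ) - 1 := Real.sqrt_sq (by linarith)
  obtain ⟨M, hMdef⟩ : ∃ M, M = (1 + s) / (d:ℝ) := ⟨_, rfl⟩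
  have hA : M + ((d:ℝ) - 1) * y = 1 := by
    rw [hy, hMdef]; field_simp; ring
  have hB : M ^ 2 + ((d:ℝ) - 1) * y ^ 2 = p₂ := by
    rw [hy, hMdef]; field_simp; ring_nf
    linear_combination (d:ℝ) * hs2
  have key : ∀ i, x i ≤ M := by
    intro i
    have hsum : ∑ j ∈ Finset.univ.erase i, x j = 1 - x i := by
      rw [Finset.sum_erase_eq_sub (Finset.mem_univ i), h1]
    have hsum2 : ∑ j ∈ Finset.univ.erase i, x j ^ 2 = p₂ - x i ^ 2 := by
      rw [Finset.sum_erase_eq_sub (Finset.mem_univ i), h2]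
    have hcs := sq_sum_le_card_mul_sum_sq (s := Finset.univ.erase i) (f := x)
    rw [hsum, hsum2, Finset.card_erase_of_mem (Finset.mem_univ i), Finset.card_univ,
      Fintype.card_fin] at hcs
    have hcard : ((d - 1 : ℕ) : ℝ) = (d:ℝ) - 1 := by
      have : 1 ≤ d := by omega
      push_cast [this]; ring
    rw [hcard] at hcs
    have h3 : ((d:ℝ) * x i - 1) ^ 2 ≤ s ^ 2 := by nlinarith
    have h4 : (d:ℝ) * x i - 1 ≤ s := by nlinarith
    rw [hMdef, le_div_iff₀ hdpos]; linarith
  have hpt : ∀ i, x i ^ 3 ≤ (M + 2*y) * x i ^ 2 - (2*M*y + y^2) * x i + M * y^2 := by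
    intro i
    nlinarith [mul_nonneg (sq_nonneg (x i - y)) (sub_nonneg.2 (key i))]
  have hle : ∑ i, x i ^ 3 ≤ ∑ i, ((M + 2*y) * x i ^ 2 - (2*M*y + y^2) * x i + M * y^2) :=
    Finset.sum_le_sum fun i _ => hpt i
  have hsumval : ∑ i, ((M + 2*y) * x i ^ 2 - (2*M*y + y^2) * x i + M * y^2)
      = (M + 2*y) * p₂ - (2*M*y + y^2) * 1 + d * (M * y^2) := by
    rw [Finset.sum_add_distrib, Finset.sum_sub_distrib, ← Finset.mul_sum, ← Finset.mul_sum,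
      h1, h2, Finset.sum_const, Finset.card_univ, Fintype.card_fin, nsmul_eq_mul]
  have hM1 : 1 - ((d:ℝ) - 1) * y = M := by linarith
  rw [hM1]
  have hfin : (M + 2*y) * p₂ - (2*M*y + y^2) * 1 + d * (M * y^2) = M^3 + ((d:ℝ)-1) * y^3 := by
    linear_combination (2*M*y + y^2) * hA - (M + 2*y) * hB
  linarith [hle, hsumval.le]
end

section
/- Let x_1, ..., x_d be real numbers (not necessarily nonnegative) with Σ x_i = 1 and Σ x_i^2 = p_2 where 1/d ≤ p_2 ≤ 1. Then Σ x_i^3 ≤ [1 − (d−1)y]³ + (d−1)y³, where y = (d − 1 − √((d−1)(p_2 d − 1)))/(d(d−1)). -/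
set_option maxHeartbeats 2000000 in
theorem p3_upper_bound_real (d : ℕ) (hd : 2 ≤ d) (x : Fin d → ℝ)
    (h1 : ∑ i, x i = 1)
    (p₂ : ℝ) (h2 : ∑ i, (x i) ^ 2 = p₂)
    (hp₂ : 1 / (d : ℝ) ≤ p₂ ∧ p₂ ≤ 1) :
    let y : ℝ := ((d : ℝ) - 1 - Real.sqrt (((d : ℝ) - 1) * (p₂ * d - 1))) /
      ((d : ℝ) * ((d : ℝ) - 1))
    ∑ i, (x i) ^ 3 ≤ (1 - ((d : ℝ) - 1) * y) ^ 3 + ((d : ℝ) - 1) * y ^ 3 := by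
  intro y
  obtain ⟨hpl, hpu⟩ := hp₂
  have hd2 : (2:ℝ) ≤ (d:ℝ) := by exact_mod_cast hd
  have hdpos : (0:ℝ) < (d:ℝ) := by linarith
  have hdne : (d:ℝ) ≠ 0 := ne_of_gt hdpos
  have hd1pos : (0:ℝ) < (d:ℝ) - 1 := by linarith
  have hd1ne : (d:ℝ) - 1 ≠ 0 := ne_of_gt hd1pos
  have hpd : (1:ℝ) ≤ p₂ * d := by
    have := (div_le_iff₀ hdpos).mp hpl
    linarith
  set S : ℝ := Real.sqrt (((d : ℝ) - 1) * (p₂ * d - 1)) with hSdef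
  have hSnn : 0 ≤ S := Real.sqrt_nonneg _
  have hS2 : S ^ 2 = ((d : ℝ) - 1) * (p₂ * d - 1) :=
    Real.sq_sqrt (by nlinarith)
  have hy : y = ((d : ℝ) - 1 - S) / ((d : ℝ) * ((d : ℝ) - 1)) := rfl
  have dY : (d:ℝ) * ((d:ℝ) - 1) * y = (d:ℝ) - 1 - S := by
    rw [hy]; field_simp
  set a : ℝ := 1 - ((d : ℝ) - 1) * y with ha
  have dA : (d:ℝ) * a = 1 + S := by
    rw [ha]; nlinarith [dY]
  -- p₂ in terms of a and y
  have hp2eq : p₂ = a ^ 2 + ((d:ℝ) - 1) * y ^ 2 := by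
    have hmul : (d:ℝ)^2 * ((d:ℝ) - 1) * p₂ =
        (d:ℝ)^2 * ((d:ℝ) - 1) * (a ^ 2 + ((d:ℝ) - 1) * y ^ 2) := by
      linear_combination (-(((d:ℝ)-1) * ((d:ℝ)*a + 1 + S))) * dA +
        (-((d:ℝ)*((d:ℝ)-1)*y + (d:ℝ) - 1 - S)) * dY + (-(d:ℝ)) * hS2
    have hne : (d:ℝ)^2 * ((d:ℝ) - 1) ≠ 0 := by positivity
    exact mul_left_cancel₀ hne hmul
  -- each coordinate is at most a
  have key : ∀ i : Fin d, x i ≤ a := by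
    intro i
    have hcs := sq_sum_le_card_mul_sum_sq (s := (Finset.univ : Finset (Fin d)).erase i) (f := x)
    have hcard : ((Finset.univ : Finset (Fin d)).erase i).card = d - 1 := by
      rw [Finset.card_erase_of_mem (Finset.mem_univ i), Finset.card_univ, Fintype.card_fin]
    have hcardR : (((Finset.univ : Finset (Fin d)).erase i).card : ℝ) = (d:ℝ) - 1 := by
      rw [hcard]
      have : (1:ℕ) ≤ d := by omega
      push_cast [Nat.cast_sub this]
      ring
    have hsum1 : ∑ j ∈ (Finset.univ : Finset (Fin d)).erase i, x j = 1 - x i := by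
      have := Finset.sum_erase_add (Finset.univ : Finset (Fin d)) x (Finset.mem_univ i)
      rw [h1] at this; linarith
    have hsum2 : ∑ j ∈ (Finset.univ : Finset (Fin d)).erase i, (x j) ^ 2 = p₂ - (x i) ^ 2 := by
      have := Finset.sum_erase_add (Finset.univ : Finset (Fin d)) (fun j => (x j)^2) (Finset.mem_univ i)
      rw [h2] at this; linarith
    rw [hsum1, hsum2, hcardR] at hcs
    -- (d * x i - 1)^2 ≤ S^2
    have hsq : ((d:ℝ) * x i - 1) ^ 2 ≤ S ^ 2 := by nlinarith
    have hle : (d:ℝ) * x i - 1 ≤ S := by nlinarith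
    nlinarith [dA]
  -- pointwise cubic bound
  have hpt : ∀ i : Fin d, (x i) ^ 3 ≤
      (a + 2*y) * (x i) ^ 2 - (2*a*y + y^2) * (x i) + a * y^2 := by
    intro i
    nlinarith [mul_nonneg (sub_nonneg.2 (key i)) (sq_nonneg (x i - y))]
  have hsum : ∑ i, (x i) ^ 3 ≤
      (a + 2*y) * p₂ - (2*a*y + y^2) * 1 + (d:ℝ) * (a * y^2) := by
    calc ∑ i, (x i) ^ 3
        ≤ ∑ i, ((a + 2*y) * (x i) ^ 2 - (2*a*y + y^2) * (x i) + a * y^2) :=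
          Finset.sum_le_sum fun i _ => hpt i
      _ = (a + 2*y) * p₂ - (2*a*y + y^2) * 1 + (d:ℝ) * (a * y^2) := by
          rw [Finset.sum_add_distrib, Finset.sum_sub_distrib, ← Finset.mul_sum,
            ← Finset.mul_sum, h1, h2, Finset.sum_const, Finset.card_univ, Fintype.card_fin,
            nsmul_eq_mul]
  have hfin : (a + 2*y) * p₂ - (2*a*y + y^2) * 1 + (d:ℝ) * (a * y^2)
      = a ^ 3 + ((d : ℝ) - 1) * y ^ 3 := by
    rw [hp2eq, ha]; ring
  linarith [hsum, hfin.le]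
end

section
/- Let x_1 ≥ x_2 ≥ ... ≥ x_d ≥ 0 with Σ x_i = 1 and Σ x_i^2 = p_2, and suppose x is of the form (x_1, x_1, ..., x_1, x_{α+1}, 0, ..., 0) with x_1 appearing α times and x_{α+1} < x_1, x_{α+1} > 0. Then α = ⌊1/p_2⌋. -/
lemma sum_form_aux (d α : ℕ) (hαd : α < d) (a b : ℝ) :
    ∑ i : Fin d, (if i.val < α then a else if i.val = α then b else 0)
      = α * a + b := by
  rw [Fin.sum_univ_eq_sum_range (fun i => if i < α then a else if i = α then b else 0)]
  have h : ∀ i ∈ Finset.range d,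
      (if i < α then a else if i = α then b else 0)
        = (if i ∈ Finset.range α then a else 0) + (if i = α then b else 0) := by
    intro i _
    by_cases h1 : i < α
    · simp [h1, Nat.ne_of_lt h1]
    · simp [h1]
  rw [Finset.sum_congr rfl h, Finset.sum_add_distrib, Finset.sum_ite_mem,
    Finset.inter_comm,
    Finset.inter_eq_left.mpr (Finset.range_subset_range.mpr hαd.le), Finset.sum_const, Finset.card_range,
    Finset.sum_ite_eq' (Finset.range d) α (fun _ => b)]
  simp [Finset.mem_range.mpr hαd, nsmul_eq_mul]

theorem alpha_eq_floor_inv_p2 (d α : ℕ) (hα : 1 ≤ α) (hαd : α < d)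
    (x₁ x' : ℝ) (hx' : 0 < x') (hx'₁ : x' < x₁)
    (x : Fin d → ℝ)
    (hform : ∀ i : Fin d, x i = if i.val < α then x₁ else if i.val = α then x' else 0)
    (p₂ : ℝ)
    (h1 : ∑ i, x i = 1) (h2 : ∑ i, (x i) ^ 2 = p₂) :
    α = ⌊1 / p₂⌋₊ := by
  have hs1 : (α : ℝ) * x₁ + x' = 1 := by
    rw [← h1, Finset.sum_congr rfl (fun i _ => hform i), sum_form_aux d α hαd]
  have hs2 : (α : ℝ) * x₁ ^ 2 + x' ^ 2 = p₂ := by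
    rw [← h2]
    have : ∀ i ∈ Finset.univ, (x i) ^ 2
        = if i.val < α then x₁ ^ 2 else if i.val = α then x' ^ 2 else 0 := by
      intro i _
      rw [hform i]
      split_ifs <;> simp
    rw [Finset.sum_congr rfl this, sum_form_aux d α hαd]
  have hαR : (1 : ℝ) ≤ (α : ℝ) := by exact_mod_cast hα
  have hlow : 1 < ((α : ℝ) + 1) * p₂ := by
    nlinarith [sq_nonneg (x₁ - x'), sq_nonneg x₁, sq_nonneg x']
  have hhigh : (α : ℝ) * p₂ < 1 := by
    nlinarith [mul_pos hx' (lt_trans hx' hx'₁), sq_nonneg (x₁ - x')]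
  have hp2 : 0 < p₂ := by nlinarith
  symm
  rw [Nat.floor_eq_iff (by positivity)]
  constructor
  · rw [le_div_iff₀ hp2]; linarith
  · rw [div_lt_iff₀ hp2]; push_cast; linarith
end

section
/- Let m_0, ..., m_n be reals such that the Hankel matrix H_ℓ = [m_{i+j}]_{i,j=0}^ℓ with ℓ = ⌊n/2⌋ is strictly positive definite (with m_{2ℓ+1} chosen arbitrarily if n is even). Then there exists a unit vector |φ⟩ ∈ ℝ^{ℓ+1} and a real symmetric matrix X of size (ℓ+1)×(ℓ+1) such that ⟨φ| X^k |φ⟩ = m_k for k = 0, 1, ..., n, assuming m_0 = 1. -/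
open Matrix

open scoped MatrixOrder in
private lemma aux_rep (L : ℕ) (m : ℕ → ℝ)
    (hH : (Matrix.of fun i j : Fin (L + 1) => m (i.val + j.val)).PosDef) :
    ∃ (φ : Fin (L + 1) → ℝ) (X : Matrix (Fin (L + 1)) (Fin (L + 1)) ℝ),
      X.IsSymm ∧ φ ⬝ᵥ φ = m 0 ∧
        ∀ k, k ≤ 2 * L + 1 → φ ⬝ᵥ ((X ^ k).mulVec φ) = m k := by
  set H : Matrix (Fin (L+1)) (Fin (L+1)) ℝ :=
    Matrix.of (fun i j => m (i.val + j.val)) with hHdef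
  have hHsym : Hᵀ = H := by
    ext i j
    simp only [transpose_apply, hHdef, of_apply]
    rw [Nat.add_comm]
  have hHdet : IsUnit H.det := hH.det_pos.ne'.isUnit
  have hHinv : H * H⁻¹ = 1 := mul_nonsing_inv _ hHdet
  -- the square root of H
  set G : Matrix (Fin (L+1)) (Fin (L+1)) ℝ := CFC.sqrt H with hGdef
  have hGG : G * G = H := CFC.sqrt_mul_sqrt_self H hH.posSemidef.nonneg
  have hGsym : Gᵀ = G := (CFC.sqrt_nonneg H).posSemidef.isHermitian
  have hGdet : IsUnit G.det := by
    have h1 : G.det * G.det = H.det := by rw [← det_mul, hGG]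
    have h2 : G.det ≠ 0 := by
      intro h
      rw [h, mul_zero] at h1
      exact hH.det_pos.ne' h1.symm
    exact h2.isUnit
  have hGinv : G⁻¹ * G = 1 := nonsing_inv_mul _ hGdet
  have hGinv' : G * G⁻¹ = 1 := mul_nonsing_inv _ hGdet
  -- the shifted moments vector and the shift matrix
  set μ : Fin (L+1) → ℝ := fun i => m (L + 1 + i.val) with hμdef
  set A : Matrix (Fin (L+1)) (Fin (L+1)) ℝ :=
    Matrix.of (fun i j => if j.val < L then (if i.val = j.val + 1 then (1:ℝ) else 0)
      else (H⁻¹ *ᵥ μ) i) with hAdef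
  have hcol : ∀ j : Fin (L+1), (hj : j.val < L) →
      (fun k => A k j) = Pi.single (⟨j.val + 1, by omega⟩ : Fin (L+1)) (1:ℝ) := by
    intro j hj
    ext k
    simp only [hAdef, of_apply, hj, if_true, Pi.single_apply, Fin.ext_iff]
  have hcolL : ∀ j : Fin (L+1), ¬ (j.val < L) → (fun k => A k j) = H⁻¹ *ᵥ μ := by
    intro j hj
    ext k
    simp only [hAdef, of_apply, hj, if_false]
  -- the key identity H * A = shifted Hankel
  have hHA : H * A = Matrix.of (fun i j : Fin (L+1) => m (i.val + j.val + 1)) := by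
    ext i j
    show H i ⬝ᵥ (fun k => A k j) = m (i.val + j.val + 1)
    by_cases hj : j.val < L
    · rw [hcol j hj, dotProduct_single]
      simp only [mul_one]
      show m (i.val + (j.val + 1)) = m (i.val + j.val + 1)
      rw [← Nat.add_assoc]
    · rw [hcolL j hj]
      show (H *ᵥ (H⁻¹ *ᵥ μ)) i = m (i.val + j.val + 1)
      rw [mulVec_mulVec, hHinv, one_mulVec]
      have : j.val = L := by omega
      simp only [hμdef]
      congr 1
      omega
  have hAH : Aᵀ * H = H * A := by
    have hsym : (H * A)ᵀ = H * A := by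
      rw [hHA]
      ext i j
      simp only [transpose_apply, of_apply]
      congr 1
      omega
    calc Aᵀ * H = Aᵀ * Hᵀ := by rw [hHsym]
      _ = (H * A)ᵀ := (transpose_mul _ _).symm
      _ = H * A := hsym
  have hpow : ∀ k : ℕ, H * A ^ k = (Aᵀ) ^ k * H := by
    intro k
    induction k with
    | zero => simp
    | succ k ih =>
      calc H * A ^ (k+1) = (H * A ^ k) * A := by rw [pow_succ, Matrix.mul_assoc]
        _ = ((Aᵀ) ^ k * H) * A := by rw [ih]
        _ = (Aᵀ) ^ k * (H * A) := by rw [Matrix.mul_assoc]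
        _ = (Aᵀ) ^ k * (Aᵀ * H) := by rw [hAH]
        _ = (Aᵀ) ^ (k+1) * H := by rw [pow_succ, Matrix.mul_assoc]
  -- powers of A applied to e₀
  have hA0 : ∀ b : ℕ, (hb : b ≤ L) →
      A ^ b *ᵥ Pi.single (0 : Fin (L+1)) (1:ℝ) = Pi.single (⟨b, by omega⟩ : Fin (L+1)) 1 := by
    intro b hb
    induction b with
    | zero =>
      rw [pow_zero, Matrix.one_mulVec]
      congr 1
    | succ b ih =>
      rw [pow_succ', ← mulVec_mulVec, ih (by omega), mulVec_single_one]
      ext i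
      have hbL : b < L := by omega
      simp only [hAdef, of_apply, hbL, if_true, Pi.single_apply, Fin.ext_iff, mul_one, col_apply]
  have hA1 : A ^ (L+1) *ᵥ Pi.single (0 : Fin (L+1)) (1:ℝ) = H⁻¹ *ᵥ μ := by
    rw [pow_succ', ← mulVec_mulVec, hA0 L le_rfl, mulVec_single_one]
    ext i
    simp only [hAdef, of_apply, lt_irrefl, if_false, mul_one, col_apply]
  -- the key moment computation
  have key : ∀ a b : ℕ, a ≤ L → b ≤ L + 1 →
      Pi.single (0 : Fin (L+1)) (1:ℝ) ⬝ᵥ ((H * A ^ (a+b)) *ᵥ Pi.single 0 1) = m (a+b) := by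
    intro a b ha hb
    have h1 : H * A ^ (a+b) = (A ^ a)ᵀ * (H * A ^ b) := by
      rw [pow_add, ← Matrix.mul_assoc, hpow a, Matrix.mul_assoc, transpose_pow]
    rw [h1, ← mulVec_mulVec, dotProduct_mulVec, vecMul_transpose, hA0 a ha,
      ← mulVec_mulVec]
    rcases Nat.lt_or_ge b (L+1) with hb' | hb'
    · rw [hA0 b (by omega), mulVec_single_one]
      rw [single_dotProduct]
      simp only [one_mul, mul_one]
      show m ((a : ℕ) + b) = m (a + b)
      rfl
    · have hbe : b = L + 1 := by omega
      subst hbe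
      rw [hA1, mulVec_mulVec, hHinv, one_mulVec, single_dotProduct, one_mul]
      show m (L + 1 + a) = m (a + (L+1))
      congr 1
      omega
  have flip : ∀ (M : Matrix (Fin (L+1)) (Fin (L+1)) ℝ) (v w : Fin (L+1) → ℝ),
      (M *ᵥ v) ⬝ᵥ w = v ⬝ᵥ (Mᵀ *ᵥ w) := by
    intro M v w
    rw [dotProduct_comm, dotProduct_mulVec, dotProduct_comm, mulVec_transpose]
  -- assemble
  refine ⟨G *ᵥ Pi.single 0 1, G * A * G⁻¹, ?_, ?_, ?_⟩
  · -- symmetry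
    show (G * A * G⁻¹)ᵀ = G * A * G⁻¹
    have h2 : Aᵀ * (G * G) = (G * G) * A := by
      rw [hGG]; exact hAH
    calc (G * A * G⁻¹)ᵀ = G⁻¹ᵀ * (Aᵀ * Gᵀ) := by
          rw [transpose_mul, transpose_mul]
      _ = G⁻¹ * (Aᵀ * G) := by rw [transpose_nonsing_inv, hGsym]
      _ = G⁻¹ * (Aᵀ * G) * (G * G⁻¹) := by rw [hGinv', Matrix.mul_one]
      _ = G⁻¹ * (Aᵀ * (G * G)) * G⁻¹ := by simp only [Matrix.mul_assoc]
      _ = G⁻¹ * ((G * G) * A) * G⁻¹ := by rw [h2]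
      _ = (G⁻¹ * G) * (G * (A * G⁻¹)) := by simp only [Matrix.mul_assoc]
      _ = G * A * G⁻¹ := by rw [hGinv, Matrix.one_mul, Matrix.mul_assoc]
  · -- normalization
    have h0 := key 0 0 (by omega) (by omega)
    simp only [Nat.add_zero, pow_zero, Matrix.mul_one] at h0
    rw [flip, hGsym, mulVec_mulVec, hGG]
    exact h0
  · -- moments
    intro k hk
    have hXpow : (G * A * G⁻¹) ^ k = G * A ^ k * G⁻¹ := by
      clear hk
      induction k with
      | zero => rw [pow_zero, pow_zero, Matrix.mul_one, hGinv']
      | succ k ih =>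
        calc (G * A * G⁻¹) ^ (k+1) = (G * A ^ k * G⁻¹) * (G * A * G⁻¹) := by
              rw [pow_succ, ih]
          _ = G * A ^ k * ((G⁻¹ * G) * (A * G⁻¹)) := by simp only [Matrix.mul_assoc]
          _ = G * A ^ k * (A * G⁻¹) := by rw [hGinv, Matrix.one_mul]
          _ = G * A ^ (k+1) * G⁻¹ := by rw [pow_succ]; simp only [Matrix.mul_assoc]
    rw [hXpow, flip, hGsym, mulVec_mulVec, mulVec_mulVec]
    have hconj : G * (G * A ^ k * G⁻¹) * G = H * A ^ k := by
      calc G * (G * A ^ k * G⁻¹) * G = (G * G) * (A ^ k * (G⁻¹ * G)) := by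
            simp only [Matrix.mul_assoc]
        _ = H * A ^ k := by rw [hGinv, hGG, Matrix.mul_one]
    rw [hconj]
    rcases Nat.lt_or_ge k (L+2) with hk1 | hk1
    · have := key 0 k (by omega) (by omega)
      rw [Nat.zero_add] at this
      exact this
    · have := key (k - (L+1)) (L+1) (by omega) le_rfl
      rw [Nat.sub_add_cancel (by omega)] at this
      exact this

theorem pure_state_representation_of_posdef_hankel (n : ℕ) (m : ℕ → ℝ)
    (hm0 : m 0 = 1)
    (hH : (Matrix.of fun i j : Fin (n / 2 + 1) => m (i.val + j.val)).PosDef) :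
    ∃ (φ : Fin (n / 2 + 1) → ℝ) (X : Matrix (Fin (n / 2 + 1)) (Fin (n / 2 + 1)) ℝ),
      X.IsSymm ∧ φ ⬝ᵥ φ = 1 ∧ ∀ k, k ≤ n → φ ⬝ᵥ ((X ^ k).mulVec φ) = m k := by
  obtain ⟨φ, X, h1, h2, h3⟩ := aux_rep (n / 2) m hH
  exact ⟨φ, X, h1, by rw [h2, hm0], fun k hk => h3 k (by omega)⟩
end
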